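/- Let X be a non-empty set of integers. (i) If X consists only of strictly positive integers, then D(X) = 0. (ii) If 0 ∈ X and X consists of non-negative integers, then D(X) = 1. (iii) If X contains both a positive and a negative integer, then χ(X) ≤ D(X) ≤ diam(X), where diam(X) = sup_{x,y ∈ X} |x − y|. -/

import Mathlib

/-- A minimal zero-sum sequence over `X`: a non-empty multiset of elements of `X`
whose sum is `0` and such that no non-empty proper sub-multiset has sum `0`. -/
def IsMinZeroSumSeq {G : Type*} [AddCommGroup G] (X : Set G) (s : Multiset G) : Prop :=
  s ≠ 0 ∧ (∀ x ∈ s, x ∈ X) ∧ s.sum = 0 ∧ ∀ t < s, t ≠ 0 → t.sum ≠ 0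

/-- The Davenport constant of a subset `X` of an abelian group: the supremum of the
lengths of minimal zero-sum sequences over `X` (0 if there are none). -/
noncomputable def davenport {G : Type*} [AddCommGroup G] (X : Set G) : ℕ∞ :=
  ⨆ (s : Multiset G) (_ : IsMinZeroSumSeq X s), (Multiset.card s : ℕ∞)


/-- `χ(X) = sup {(|x|+|y|)/gcd(x,y) : x, y ∈ X, xy < 0}`. -/
noncomputable def chi (X : Set ℤ) : ℕ∞ :=
  ⨆ (x : ℤ) (_ : x ∈ X) (y : ℤ) (_ : y ∈ X) (_ : x * y < 0),
    (((x.natAbs + y.natAbs) / Int.gcd x y : ℕ) : ℕ∞)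

/-- `diam(X) = sup_{x,y ∈ X} |x - y|`. -/
noncomputable def diamZ (X : Set ℤ) : ℕ∞ :=
  ⨆ (x : ℤ) (_ : x ∈ X) (y : ℤ) (_ : y ∈ X), ((x - y).natAbs : ℕ∞)

/-- All elements nonneg and sum zero implies all zero. -/
lemma allzeroAux : ∀ (s : Multiset ℤ), (∀ x ∈ s, (0:ℤ) ≤ x) → s.sum = 0 → ∀ x ∈ s, x = 0 := by
  intro s
  induction s using Multiset.induction with
  | empty => simp
  | cons z t ih =>
    intro h hsum x hx
    have hz : 0 ≤ z := h z (Multiset.mem_cons_self z t)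
    have ht : ∀ w ∈ t, (0:ℤ) ≤ w := fun w hw => h w (Multiset.mem_cons_of_mem hw)
    have hts : 0 ≤ t.sum := Multiset.sum_nonneg ht
    rw [Multiset.sum_cons] at hsum
    have hz0 : z = 0 := by linarith
    have hts0 : t.sum = 0 := by linarith
    rcases Multiset.mem_cons.mp hx with rfl | hx
    · exact hz0
    · exact ih ht hts0 x hx

lemma sumNegAux : ∀ (s : Multiset ℤ), s ≠ 0 → (∀ x ∈ s, x < 0) → s.sum < 0 := by
  intro s
  induction s using Multiset.induction with
  | empty => simp
  | cons z t ih =>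
    intro _ h
    rw [Multiset.sum_cons]
    have hz : z < 0 := h z (Multiset.mem_cons_self z t)
    by_cases ht : t = 0
    · simp [ht, hz]
    · have := ih ht (fun w hw => h w (Multiset.mem_cons_of_mem hw))
      linarith

lemma existsNonnegAux (s : Multiset ℤ) (hne : s ≠ 0) (h : 0 ≤ s.sum) : ∃ x ∈ s, (0:ℤ) ≤ x := by
  by_contra hc
  push_neg at hc
  exact absurd h (not_le.mpr (sumNegAux s hne hc))

lemma existsNonposAux (s : Multiset ℤ) (hne : s ≠ 0) (h : s.sum ≤ 0) : ∃ x ∈ s, x ≤ (0:ℤ) := by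
  have hne' : s.map (fun t => -t) ≠ 0 := by
    simpa [Multiset.map_eq_zero] using hne
  have hsum : 0 ≤ (s.map (fun t => -t)).sum := by
    rw [Multiset.sum_map_neg']
    linarith
  obtain ⟨x, hx, hx0⟩ := existsNonnegAux _ hne' hsum
  simp only [Multiset.mem_map] at hx
  obtain ⟨u, hu, rfl⟩ := hx
  exact ⟨u, hu, by linarith⟩

/-- Greedy arrangement lemma: a zero-sum multiset with elements in `[-a, b]`
can be ordered so that all partial sums stay in `(-a, b]`. -/
lemma greedyAux (a b : ℤ) (ha : 0 < a) (hb : 0 ≤ b) :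
    ∀ (n : ℕ) (c : ℤ) (s : Multiset ℤ), Multiset.card s = n →
      (∀ x ∈ s, -a ≤ x ∧ x ≤ b) → -a < c → c ≤ b → c + s.sum = 0 →
      ∃ l : List ℤ, (l : Multiset ℤ) = s ∧
        ∀ i : ℕ, -a < c + (l.take i).sum ∧ c + (l.take i).sum ≤ b := by
  intro n
  induction n with
  | zero =>
    intro c s hcard _ hc1 hc2 _
    have hs : s = 0 := Multiset.card_eq_zero.mp hcard
    exact ⟨[], by simp [hs], fun i => by simp [hc1, hc2]⟩
  | succ n ih =>
    intro c s hcard hmem hc1 hc2 hsum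
    have hs0 : s ≠ 0 := by rintro rfl; simp at hcard
    obtain ⟨x, hxs, hx1, hx2⟩ : ∃ x ∈ s, -a < c + x ∧ c + x ≤ b := by
      rcases le_or_gt c 0 with hc | hc
      · obtain ⟨x, hxs, hx⟩ := existsNonnegAux s hs0 (by linarith)
        exact ⟨x, hxs, by linarith, by linarith [(hmem x hxs).2]⟩
      · obtain ⟨x, hxs, hx⟩ := existsNonposAux s hs0 (by linarith)
        exact ⟨x, hxs, by linarith [(hmem x hxs).1], by linarith⟩
    have hcons : x ::ₘ s.erase x = s := Multiset.cons_erase hxs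
    have hcard' : Multiset.card (s.erase x) = n := by
      rw [Multiset.card_erase_of_mem hxs, hcard]
      rfl
    have hsum' : (c + x) + (s.erase x).sum = 0 := by
      have : s.sum = x + (s.erase x).sum := by
        conv_lhs => rw [← hcons]
        rw [Multiset.sum_cons]
      linarith
    obtain ⟨l', hl', hpref⟩ := ih (c + x) (s.erase x) hcard'
      (fun z hz => hmem z (Multiset.mem_of_mem_erase hz)) hx1 hx2 hsum'
    refine ⟨x :: l', by rw [← hcons, ← hl']; rfl, fun i => ?_⟩
    cases i with
    | zero => simpa using ⟨hc1, hc2⟩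
    | succ k =>
      have := hpref k
      simpa [List.take_succ_cons, add_assoc] using this

/-- Bound on the length of a minimal zero-sum sequence with elements in `[-a, b]`. -/
lemma cardLeAux (a b : ℤ) (ha : 0 < a) (hb : 0 ≤ b) (s : Multiset ℤ)
    (hmem : ∀ x ∈ s, -a ≤ x ∧ x ≤ b) (hsum : s.sum = 0)
    (hmin : ∀ t < s, t ≠ 0 → t.sum ≠ 0) :
    (Multiset.card s : ℤ) ≤ a + b := by
  obtain ⟨l, hl, hpref⟩ := greedyAux a b ha hb (Multiset.card s) 0 s rfl hmem (by linarith) hb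
    (by simp [hsum])
  have hlen : l.length = Multiset.card s := by rw [← hl]; simp
  have aux : ∀ i j : ℕ, i < j → j < Multiset.card s → (l.take i).sum ≠ (l.take j).sum := by
    intro i j hij hj heq
    set seg := (l.drop i).take (j - i) with hseg
    have hsub : List.Sublist seg l := ((l.drop i).take_sublist _).trans (l.drop_sublist i)
    have htj : l.take j = l.take i ++ seg := by
      rw [hseg, ← List.take_add]
      congr 1
      omega
    have hsegsum : seg.sum = 0 := by
      have h2 := congrArg List.sum htj
      rw [List.sum_append] at h2
      linarith [heq, h2]
    have hlenseg : seg.length = j - i := by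
      rw [hseg, List.length_take, List.length_drop, hlen]
      omega
    have hle : (seg : Multiset ℤ) ≤ s := hl ▸ Multiset.coe_le.mpr hsub.subperm
    have hcardseg : Multiset.card (seg : Multiset ℤ) < Multiset.card s := by
      rw [Multiset.coe_card, hlenseg]
      omega
    have hlt : (seg : Multiset ℤ) < s :=
      lt_of_le_of_ne hle (fun h => by rw [h] at hcardseg; exact lt_irrefl _ hcardseg)
    have hnz : (seg : Multiset ℤ) ≠ 0 := by
      rw [Ne, Multiset.coe_eq_zero]
      intro h
      rw [h] at hlenseg
      simp at hlenseg
      omega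
    exact hmin _ hlt hnz (by simpa using hsegsum)
  have key : Multiset.card s ≤ (Finset.Ioc (-a) b).card := by
    have := Finset.card_le_card_of_injOn (f := fun i => (l.take i).sum)
      (s := Finset.range (Multiset.card s)) (t := Finset.Ioc (-a) b)
      (fun i _ => by
        have := hpref i
        simp only [zero_add] at this
        exact Finset.mem_Ioc.mpr this)
      (fun i hi j hj h => by
        by_contra hne
        rcases lt_or_gt_of_ne hne with hlt | hlt
        · exact aux i j hlt (Finset.mem_range.mp hj) h
        · exact aux j i hlt (Finset.mem_range.mp hi) h.symm)
    simpa using this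
  have hcardIoc : (Finset.Ioc (-a) b).card = (b - -a).toNat := Int.card_Ioc _ _
  rw [hcardIoc] at key
  omega

/-- A multiset with all elements in `{x, y}` is a sum of replicates. -/
lemma eqRepAux (x y : ℤ) (hxy : x ≠ y) : ∀ (t : Multiset ℤ), (∀ z ∈ t, z = x ∨ z = y) →
    t = Multiset.replicate (t.count x) x + Multiset.replicate (t.count y) y := by
  intro t
  induction t using Multiset.induction with
  | empty => simp
  | cons z t ih =>
    intro h
    have hz := h z (Multiset.mem_cons_self z t)
    have ht := fun w hw => h w (Multiset.mem_cons_of_mem hw)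
    rcases hz with rfl | rfl
    · rw [Multiset.count_cons_self, Multiset.count_cons_of_ne (Ne.symm hxy),
        Multiset.replicate_succ, Multiset.cons_add]
      rw [← ih ht]
    · rw [Multiset.count_cons_of_ne hxy, Multiset.count_cons_self, Multiset.replicate_succ]
      conv_lhs => rw [ih ht]
      rw [← Multiset.singleton_add, ← Multiset.singleton_add, add_left_comm]
  
/-- If `card ≤ 1` fails for an all-zero minimal sequence we contradict minimality. -/
lemma cardLeOneAux (s : Multiset ℤ) (hne : s ≠ 0)
    (hmin : ∀ t < s, t ≠ 0 → t.sum ≠ 0) (hz : ∀ x ∈ s, x = 0) :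
    Multiset.card s ≤ 1 := by
  by_contra h
  push_neg at h
  obtain ⟨x, hx⟩ := Multiset.exists_mem_of_ne_zero hne
  have hx0 := hz x hx
  have hlt : ({0} : Multiset ℤ) < s := by
    refine lt_of_le_of_ne ?_ ?_
    · rw [← hx0]
      exact Multiset.singleton_le.mpr hx
    · intro he
      rw [← he] at h
      simp at h
  exact hmin _ hlt (by simp) (by simp)

/-- Key construction: for `x > 0 > y` in `X`, `(|x|+|y|)/gcd(x,y) ≤ D(X)`. -/
lemma chiKeyAux (X : Set ℤ) (x y : ℤ) (hx : x ∈ X) (hy : y ∈ X) (hxp : 0 < x) (hyn : y < 0) :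
    (((x.natAbs + y.natAbs) / Int.gcd x y : ℕ) : ℕ∞) ≤ davenport X := by
  set g := Int.gcd x y with hg
  have hgdef : g = Nat.gcd x.natAbs y.natAbs := rfl
  have hgpos : 0 < g := Int.gcd_pos_iff.mpr (Or.inl hxp.ne')
  set X' := x.natAbs / g with hX'
  set Y' := y.natAbs / g with hY'
  have hdx : g ∣ x.natAbs := hgdef ▸ Nat.gcd_dvd_left _ _
  have hdy : g ∣ y.natAbs := hgdef ▸ Nat.gcd_dvd_right _ _
  have hxX : x.natAbs = g * X' := (Nat.mul_div_cancel' hdx).symm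
  have hyY : y.natAbs = g * Y' := (Nat.mul_div_cancel' hdy).symm
  have hxabs : 0 < x.natAbs := Int.natAbs_pos.mpr hxp.ne'
  have hyabs : 0 < y.natAbs := Int.natAbs_pos.mpr hyn.ne
  have hX'pos : 0 < X' := Nat.div_pos (Nat.le_of_dvd hxabs hdx) hgpos
  have hY'pos : 0 < Y' := Nat.div_pos (Nat.le_of_dvd hyabs hdy) hgpos
  have hxval : x = ((g * X' : ℕ) : ℤ) := by
    rw [← hxX]
    exact (Int.natAbs_of_nonneg hxp.le).symm
  have hyval : y = -((g * Y' : ℕ) : ℤ) := by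
    rw [← hyY]
    omega
  set s : Multiset ℤ := Multiset.replicate Y' x + Multiset.replicate X' y with hsdef
  have hxy : x ≠ y := by linarith
  have hcx : s.count x = Y' := by
    simp [hsdef, Multiset.count_replicate, Ne.symm hxy]
  have hcy : s.count y = X' := by
    simp [hsdef, Multiset.count_replicate, hxy]
  have hsum : s.sum = 0 := by
    simp only [hsdef, Multiset.sum_add, Multiset.sum_replicate, nsmul_eq_mul]
    rw [hxval, hyval]
    push_cast
    ring
  have hmem_s : ∀ z ∈ s, z = x ∨ z = y := by
    intro z hz
    rcases Multiset.mem_add.mp hz with h | h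
    · exact Or.inl (Multiset.eq_of_mem_replicate h)
    · exact Or.inr (Multiset.eq_of_mem_replicate h)
  have hcop : Nat.Coprime X' Y' := by
    rw [hX', hY', hgdef]
    exact Nat.coprime_div_gcd_div_gcd (hgdef ▸ hgpos)
  have hsne : s ≠ 0 := by
    intro h
    have : Multiset.card s = 0 := by rw [h]; rfl
    simp [hsdef] at this
    omega
  have hmin : IsMinZeroSumSeq X s := by
    refine ⟨hsne, fun z hz => ?_, hsum, ?_⟩
    · rcases hmem_s z hz with rfl | rfl
      exacts [hx, hy]
    · intro t hts ht0 htsum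
      have hle := hts.le
      have hteq : t = Multiset.replicate (t.count x) x + Multiset.replicate (t.count y) y :=
        eqRepAux x y hxy t (fun z hz => hmem_s z (Multiset.mem_of_le hle hz))
      set A := t.count x with hA
      set B := t.count y with hB
      have hAle : A ≤ Y' := hcx ▸ Multiset.count_le_of_le x hle
      have hBle : B ≤ X' := hcy ▸ Multiset.count_le_of_le y hle
      have hts0 : (A : ℤ) * x + (B : ℤ) * y = 0 := by
        rw [hteq] at htsum
        simpa [Multiset.sum_add, Multiset.sum_replicate, nsmul_eq_mul] using htsum
      have hnat : A * (g * X') = B * (g * Y') := by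
        have hz : (A : ℤ) * ((g * X' : ℕ) : ℤ) = (B : ℤ) * ((g * Y' : ℕ) : ℤ) := by
          rw [hxval, hyval] at hts0
          linarith
        exact_mod_cast hz
      have hAX : A * X' = B * Y' := by
        apply Nat.eq_of_mul_eq_mul_left hgpos
        calc g * (A * X') = A * (g * X') := by ring
          _ = B * (g * Y') := hnat
          _ = g * (B * Y') := by ring
      have hdvd : Y' ∣ A := by
        have h1 : Y' ∣ A * X' := ⟨B, by rw [hAX]; ring⟩
        exact (Nat.Coprime.dvd_of_dvd_mul_right hcop.symm h1)
      rcases Nat.eq_zero_or_pos A with hA0 | hApos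
      · have hB0 : B = 0 := by
          rw [hA0] at hAX
          simp at hAX
          omega
        rw [hteq, hA0, hB0] at ht0
        simp at ht0
      · have hAY : A = Y' := le_antisymm hAle (Nat.le_of_dvd hApos hdvd)
        have hBX : B = X' := by
          rw [hAY] at hAX
          have h2 : X' * Y' = B * Y' := by rw [mul_comm X' Y']; exact hAX
          exact (Nat.eq_of_mul_eq_mul_right hY'pos h2).symm
        have : t = s := by rw [hteq, hAY, hBX, hsdef]
        exact absurd this hts.ne
  have hcard : Multiset.card s = (x.natAbs + y.natAbs) / g := by
    rw [Nat.add_div_of_dvd_right hdx]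
    simp [hsdef, hX', hY']
    omega
  calc (((x.natAbs + y.natAbs) / Int.gcd x y : ℕ) : ℕ∞)
      = (Multiset.card s : ℕ∞) := by rw [hcard, hg]
    _ ≤ davenport X := le_iSup_of_le s (le_iSup_of_le hmin le_rfl)

theorem davenport_of_subset_int (X : Set ℤ) (hX : X.Nonempty) :
    (X ⊆ {x : ℤ | 0 < x} → davenport X = 0) ∧
    (0 ∈ X → X ⊆ {x : ℤ | 0 ≤ x} → davenport X = 1) ∧
    ((∃ x ∈ X, 0 < x) → (∃ y ∈ X, y < 0) →
      chi X ≤ davenport X ∧ davenport X ≤ diamZ X) := by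
  refine ⟨?_, ?_, ?_⟩
  · -- part (i)
    intro hpos
    have h0 : ∀ s, ¬ IsMinZeroSumSeq X s := by
      rintro s ⟨hne, hmem, hsum, -⟩
      obtain ⟨x, hx⟩ := Multiset.exists_mem_of_ne_zero hne
      have hx0 := allzeroAux s (fun z hz => (hpos (hmem z hz)).le) hsum x hx
      have h2 : (0:ℤ) < x := hpos (hmem x hx)
      omega
    refine le_antisymm ?_ zero_le
    exact iSup₂_le fun s hs => absurd hs (h0 s)
  · -- part (ii)
    intro h0X hnn
    refine le_antisymm ?_ ?_
    · apply iSup₂_le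
      intro s hs
      obtain ⟨hne, hmem, hsum, hmin⟩ := hs
      have hz : ∀ x ∈ s, x = 0 := allzeroAux s (fun z hz => hnn (hmem z hz)) hsum
      have hle := cardLeOneAux s hne hmin hz
      calc (Multiset.card s : ℕ∞) ≤ ((1 : ℕ) : ℕ∞) := Nat.cast_le.mpr hle
        _ = 1 := by norm_num
    · have hmin : IsMinZeroSumSeq X ({0} : Multiset ℤ) := by
        refine ⟨by simp, by simpa using h0X, by simp, ?_⟩
        intro t ht ht0
        have ht' : t = 0 := by
          rcases Multiset.le_singleton.mp ht.le with h | h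
          · exact h
          · exact absurd h ht.ne
        exact absurd ht' ht0
      calc (1 : ℕ∞) = (Multiset.card ({0} : Multiset ℤ) : ℕ∞) := by simp
        _ ≤ davenport X := le_iSup_of_le _ (le_iSup_of_le hmin le_rfl)
  · -- part (iii)
    rintro ⟨p, hpX, hp⟩ ⟨q, hqX, hq⟩
    constructor
    · refine iSup_le fun x => iSup_le fun hx => iSup_le fun y => iSup_le fun hy =>
        iSup_le fun hxy => ?_
      rcases mul_neg_iff.mp hxy with ⟨h1, h2⟩ | ⟨h1, h2⟩
      · exact chiKeyAux X x y hx hy h1 h2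
      · have := chiKeyAux X y x hy hx h2 h1
        rw [Nat.add_comm, Int.gcd_comm] at this
        exact this
    · apply iSup₂_le
      intro s hs
      obtain ⟨hne, hmemX, hsum, hmin⟩ := hs
      by_cases hall : ∀ x ∈ s, x = 0
      · have hcard1 := cardLeOneAux s hne hmin hall
        have h1 : (1 : ℕ∞) ≤ diamZ X := by
          have hd : ((p - q).natAbs : ℕ∞) ≤ diamZ X :=
            le_iSup_of_le p (le_iSup_of_le hpX (le_iSup_of_le q (le_iSup_of_le hqX le_rfl)))
          refine le_trans ?_ hd
          have h2 : 1 ≤ (p - q).natAbs := by omega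
          exact_mod_cast h2
        calc (Multiset.card s : ℕ∞) ≤ ((1 : ℕ) : ℕ∞) := Nat.cast_le.mpr hcard1
          _ = 1 := by norm_num
          _ ≤ diamZ X := h1
      · push_neg at hall
        have hne' : s.toFinset.Nonempty := by
          obtain ⟨x, hx⟩ := Multiset.exists_mem_of_ne_zero hne
          exact ⟨x, Multiset.mem_toFinset.mpr hx⟩
        set M := s.toFinset.max' hne' with hM
        set m := s.toFinset.min' hne' with hm
        have hMmem : M ∈ s := Multiset.mem_toFinset.mp (s.toFinset.max'_mem hne')
        have hmmem : m ∈ s := Multiset.mem_toFinset.mp (s.toFinset.min'_mem hne')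
        have hMle : ∀ x ∈ s, x ≤ M := fun x hx =>
          Finset.le_max' _ x (Multiset.mem_toFinset.mpr hx)
        have hmle : ∀ x ∈ s, m ≤ x := fun x hx =>
          Finset.min'_le _ x (Multiset.mem_toFinset.mpr hx)
        have hallzero_of : ∀ z ∈ s, (0:ℤ) ≤ z → False → True := fun _ _ _ _ => trivial
        have hMpos : 0 < M := by
          by_contra hMc
          push_neg at hMc
          obtain ⟨x, hx, hx0⟩ := hall
          have hzero : ∀ z ∈ s, z = 0 := by
            intro z hz
            have h1 : ∀ w ∈ s.map (fun t => -t), (0:ℤ) ≤ w := by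
              intro w hw
              simp only [Multiset.mem_map] at hw
              obtain ⟨u, hu, rfl⟩ := hw
              have := (hMle u hu).trans hMc
              linarith
            have h2 : (s.map (fun t => -t)).sum = 0 := by
              rw [Multiset.sum_map_neg']
              simp [hsum]
            have := allzeroAux _ h1 h2 (-z) (Multiset.mem_map_of_mem _ hz)
            linarith
          exact hx0 (hzero x hx)
        have hmneg : m < 0 := by
          by_contra hmc
          push_neg at hmc
          obtain ⟨x, hx, hx0⟩ := hall
          have hzero : ∀ z ∈ s, z = 0 :=
            allzeroAux s (fun z hz => (hmc.trans (hmle z hz) : (0:ℤ) ≤ z)) hsum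
          exact hx0 (hzero x hx)
        have hbound := cardLeAux (-m) M (by linarith) hMpos.le s
          (fun x hx => ⟨by rw [neg_neg]; exact hmle x hx, hMle x hx⟩) hsum hmin
        have h1 : Multiset.card s ≤ (M - m).natAbs := by omega
        calc (Multiset.card s : ℕ∞) ≤ ((M - m).natAbs : ℕ∞) := Nat.cast_le.mpr h1
          _ ≤ diamZ X := le_iSup_of_le M (le_iSup_of_le (hmemX M hMmem)
              (le_iSup_of_le m (le_iSup_of_le (hmemX m hmmem) le_rfl)))
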